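/- (Monotonicity of weakest edges) Let 𝓜 be a finite indexed family of machines over T with d_min(𝓜) = d, and let F be a machine over T that separates every pair of distinct states t ≠ t' with d_𝓜(t,t') = d. Then d_min(𝓜 ⊕ F) = d + 1, and every pair of distinct states t ≠ t' with d_𝓜(t,t') = d satisfies d_{𝓜 ⊕ F}(t,t') = d + 1 = d_min(𝓜 ⊕ F); that is, every minimum-distance pair of 𝓜 is still a minimum-distance pair after F is added, so the set of weakest edges only grows as such machines are added. -/

import Mathlib

open scoped Classical

/-- A machine over `T` (a closed partition of `T`): an equivalence relation on `T`
that is preserved by the transition function `δ`. -/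
structure Machine (T : Type*) (E : Type*) (δ : T → E → T) where
  rel : T → T → Prop
  equiv : Equivalence rel
  closed : ∀ x y : T, rel x y → ∀ e : E, rel (δ x e) (δ y e)

/-- The distance `d_𝓜(t,t')`: the number of machines in the family `M` that
separate `t` and `t'`. -/
noncomputable def fdist {T E ι : Type*} {δ : T → E → T} [Fintype ι]
    (M : ι → Machine T E δ) (t t' : T) : ℕ :=
  (Finset.univ.filter fun i => ¬ (M i).rel t t').card

/-- The minimum distance `d_min(𝓜)`: the minimum of `fdist M t t'` over all pairs
of distinct states `t ≠ t'`. -/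
noncomputable def dmin {T E ι : Type*} {δ : T → E → T} [Fintype ι]
    (M : ι → Machine T E δ) : ℕ :=
  sInf {d : ℕ | ∃ t t' : T, t ≠ t' ∧ d = fdist M t t'}

lemma fdist_sum {T E ι : Type*} {δ : T → E → T} [Fintype ι]
    (M : ι → Machine T E δ) (F : Machine T E δ) (t t' : T) :
    fdist (Sum.elim M (fun _ : Unit => F)) t t' =
      fdist M t t' + (if F.rel t t' then 0 else 1) := by
  unfold fdist
  rw [Finset.card_filter, Finset.card_filter, Fintype.sum_sum_type]
  by_cases h : F.rel t t' <;> simp [h] <;>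
    exact Finset.sum_congr rfl (fun i _ => by by_cases hi : (M i).rel t t' <;> simp [hi])

/-- Monotonicity of weakest edges: adding a machine `F` that separates
every minimum-distance pair of `𝓜` raises the minimum distance from `d` to `d + 1`,
and every minimum-distance pair of `𝓜` is still a minimum-distance pair of `𝓜 ⊕ F`. -/
theorem weakest_edges_monotone {T E ι : Type*} [Fintype T] [Nontrivial T] [Fintype ι]
    {δ : T → E → T} (M : ι → Machine T E δ) (F : Machine T E δ) (d : ℕ)
    (hd : dmin M = d)
    (hcov : ∀ t t' : T, t ≠ t' → fdist M t t' = d → ¬ F.rel t t') :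
    dmin (Sum.elim M (fun _ : Unit => F)) = d + 1 ∧
      ∀ t t' : T, t ≠ t' → fdist M t t' = d →
        fdist (Sum.elim M (fun _ : Unit => F)) t t' = d + 1 := by

  obtain ⟨a, b, hab⟩ := exists_pair_ne T
  have hSne : {x : ℕ | ∃ t t' : T, t ≠ t' ∧ x = fdist M t t'}.Nonempty :=
    ⟨fdist M a b, a, b, hab, rfl⟩
  have hmem := Nat.sInf_mem hSne
  rw [show sInf {x : ℕ | ∃ t t' : T, t ≠ t' ∧ x = fdist M t t'} = dmin M from rfl, hd] at hmem
  obtain ⟨u, v, huv, hduv⟩ := hmem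
  have hle : ∀ t t' : T, t ≠ t' → d ≤ fdist M t t' := by
    intro t t' h
    rw [← hd]
    exact Nat.sInf_le ⟨t, t', h, rfl⟩
  have key : ∀ t t' : T, t ≠ t' → fdist M t t' = d →
      fdist (Sum.elim M (fun _ : Unit => F)) t t' = d + 1 := by
    intro t t' h h'
    rw [fdist_sum, h', if_neg (hcov t t' h h')]
  refine ⟨?_, key⟩
  apply le_antisymm
  · exact Nat.sInf_le ⟨u, v, huv, (key u v huv hduv.symm).symm⟩
  · have hne : {x : ℕ | ∃ t t' : T, t ≠ t' ∧
        x = fdist (Sum.elim M (fun _ : Unit => F)) t t'}.Nonempty :=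
      ⟨_, u, v, huv, rfl⟩
    apply le_csInf hne
    rintro x ⟨t, t', h, rfl⟩
    rw [fdist_sum]
    rcases eq_or_lt_of_le (hle t t' h) with he | hlt
    · rw [← he, if_neg (hcov t t' h he.symm)]
    · omega
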